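/- Let G and H be non-trivial groups and let H act faithfully on a set X. If G and H are both finitely invariably generated, then G ≀_X H is invariably generated, and G ≀_X H is finitely invariably generated if and only if it is finitely generated. In particular, if G and H are finitely invariably generated then the regular wreath product G ≀ H is finitely invariably generated. -/

import Mathlib

open Function SemidirectProduct

/-- A subset `S` invariably generates `K` if replacing each element of `S` by an
arbitrary conjugate always yields a generating set of `K`. -/
def InvariablyGenerates (K : Type*) [Group K] (S : Set K) : Prop :=
  ∀ a : K → K, Subgroup.closure ((fun s => (a s)⁻¹ * s * a s) '' S) = ⊤

/-- `K` is invariably generated if `K` invariably generates itself. -/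
def IsIG (K : Type*) [Group K] : Prop :=
  InvariablyGenerates K Set.univ

/-- `K` is finitely invariably generated if some finite subset invariably generates it. -/
def IsFIG (K : Type*) [Group K] : Prop :=
  ∃ S : Set K, S.Finite ∧ InvariablyGenerates K S

/-- The base of the wreath product `G ≀_X H`: the restricted direct product
`⨁_{x ∈ X} G`, realized as the finitely supported functions `X → G`. -/
def WreathBase (G X : Type*) [Group G] : Subgroup (X → G) where
  carrier := {f | (mulSupport f).Finite}
  one_mem' := by simp
  mul_mem' {f g} hf hg := (Set.Finite.union hf hg).subset (mulSupport_mul f g)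
  inv_mem' {f} hf := by simpa using hf

lemma mem_wreathBase {G X : Type*} [Group G] {f : X → G} :
    f ∈ WreathBase G X ↔ (mulSupport f).Finite := Iff.rfl

/-- The permutation action of `H` on the base, `(h • f) x = f (h⁻¹ • x)`, so that in the
wreath product conjugation by `h` (i.e. `h · g^{(x)} · h⁻¹`) sends the coordinate subgroup
`G_x` to `G_{h • x}`; equivalently `h⁻¹ · g^{(x)} · h = g^{(h⁻¹ • x)}`, which is the
left-action rendering of "conjugation multiplies indices on the right". -/
def wreathAut (G H X : Type*) [Group G] [Group H] [MulAction H X] :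
    H →* MulAut (WreathBase G X) where
  toFun h :=
    { toFun := fun f => ⟨fun x => (f : X → G) (h⁻¹ • x),
        mem_wreathBase.mpr (((mem_wreathBase.mp f.2).image (h • ·)).subset
          fun x hx => ⟨h⁻¹ • x, hx, by simp⟩)⟩
      invFun := fun f => ⟨fun x => (f : X → G) (h • x),
        mem_wreathBase.mpr (((mem_wreathBase.mp f.2).image (h⁻¹ • ·)).subset
          fun x hx => ⟨h • x, hx, by simp⟩)⟩
      left_inv := fun f => Subtype.ext (funext fun x => by simp)
      right_inv := fun f => Subtype.ext (funext fun x => by simp)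
      map_mul' := fun f g => Subtype.ext (funext fun x => by simp) }
  map_one' := by
    ext f x
    simp
  map_mul' h₁ h₂ := by
    ext f x
    simp [mul_smul]

/-- The restricted wreath product `G ≀_X H`. -/
abbrev WreathProduct (G H X : Type*) [Group G] [Group H] [MulAction H X] :=
  WreathBase G X ⋊[wreathAut G H X] H

open scoped Classical in
/-- `g^{(y)}`: the element of the base which is `g` in coordinate `y` and trivial elsewhere. -/
noncomputable def WreathBase.single {G : Type*} (X : Type*) [Group G] (y : X) :
    G →* WreathBase G X where
  toFun g := ⟨fun x => if x = y then g else 1,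
    mem_wreathBase.mpr ((Set.finite_singleton y).subset fun x hx => by
      by_contra hxy
      exact hx (if_neg hxy))⟩
  map_one' := Subtype.ext (funext fun x => by simp)
  map_mul' g₁ g₂ := Subtype.ext (funext fun x => by by_cases h : x = y <;> simp [h])

/-- The embedding of `G` onto the coordinate subgroup `G_y` of the wreath product. -/
noncomputable def coordHom (G H : Type*) {X : Type*} [Group G] [Group H] [MulAction H X]
    (y : X) : G →* WreathProduct G H X :=
  SemidirectProduct.inl.comp (WreathBase.single X y)

/-- `H_X` is of torsion-type if there is `y ∈ X` such that for every `x` in the `H`-orbit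
of `y` and every `k ∈ H`, the `⟨k⟩`-orbit of `x` is finite. -/
def IsTorsionType (H X : Type*) [Group H] [MulAction H X] : Prop :=
  ∃ y : X, ∀ x ∈ MulAction.orbit H y, ∀ k : H, (Set.range fun n : ℤ => k ^ n • x).Finite

/-- A `Γ_z`-set: a set of base elements containing, for every `g ∈ G`, an element whose
coordinate at `z` is `g`. -/
def IsGammaSet {G X : Type*} [Group G] (z : X) (Γ : Set (WreathBase G X)) : Prop :=
  ∀ g : G, ∃ f ∈ Γ, (f : X → G) z = g

/-- The action of `H` on the base `⨁_{h ∈ H} G` of the regular wreath product `G ≀ H`,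
given by right multiplication on the index set: `(φ h f) x = f (x * h)`, so that
`h⁻¹ · g^{(x)} · h = g^{(x · h)}`. -/
def regularWreathAut (G H : Type*) [Group G] [Group H] : H →* MulAut (WreathBase G H) where
  toFun h :=
    { toFun := fun f => ⟨fun x => (f : H → G) (x * h),
        mem_wreathBase.mpr (((mem_wreathBase.mp f.2).image (· * h⁻¹)).subset
          fun x hx => ⟨x * h, hx, by simp⟩)⟩
      invFun := fun f => ⟨fun x => (f : H → G) (x * h⁻¹),
        mem_wreathBase.mpr (((mem_wreathBase.mp f.2).image (· * h)).subset
          fun x hx => ⟨x * h⁻¹, hx, by simp⟩)⟩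
      left_inv := fun f => Subtype.ext (funext fun x => by simp)
      right_inv := fun f => Subtype.ext (funext fun x => by simp)
      map_mul' := fun f g => Subtype.ext (funext fun x => by simp) }
  map_one' := by
    ext f x
    simp
  map_mul' h₁ h₂ := by
    ext f x
    simp [mul_assoc]

/-- The regular wreath product `G ≀ H`: the base is `⨁_{h ∈ H} G` and `H` acts by
permuting coordinates via right multiplication on the index set `H`. -/
abbrev RegularWreath (G H : Type*) [Group G] [Group H] :=
  WreathBase G H ⋊[regularWreathAut G H] H


section AuxIG

open scoped Classical

variable {G H X : Type*} [Group G] [Group H]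

lemma single_apply (y : X) (g : G) (x : X) :
    ((WreathBase.single X y g : WreathBase G X) : X → G) x = if x = y then g else 1 := rfl

lemma conj_single (b : WreathBase G X) (y : X) (g : G) :
    b⁻¹ * WreathBase.single X y g * b
      = WreathBase.single X y (((b : X → G) y)⁻¹ * g * (b : X → G) y) := by
  apply Subtype.ext; funext x
  simp only [Subgroup.coe_mul, Subgroup.coe_inv, Pi.mul_apply, Pi.inv_apply, single_apply]
  by_cases hc : x = y
  · subst hc; simp
  · simp [hc]

variable (φ : H →* MulAut (WreathBase G X)) (σ : H → X → X)

lemma phi_single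
    (hσ : ∀ (h : H) (f : WreathBase G X) (x : X),
      ((φ h f : WreathBase G X) : X → G) x = (f : X → G) (σ h x))
    (hinv : ∀ h x, σ h⁻¹ (σ h x) = x) (hinv' : ∀ h x, σ h (σ h⁻¹ x) = x)
    (h : H) (y : X) (g : G) :
    φ h (WreathBase.single X y g) = WreathBase.single X (σ h⁻¹ y) g := by
  apply Subtype.ext; funext x
  rw [hσ]
  simp only [single_apply]
  by_cases hc : σ h x = y
  · rw [if_pos hc, if_pos (by rw [← hc, hinv])]
  · rw [if_neg hc, if_neg (fun hx => hc (by rw [hx, hinv']))]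

lemma conj_inl (w : (WreathBase G X) ⋊[φ] H) (f : WreathBase G X) :
    w⁻¹ * inl f * w = inl (φ w.right⁻¹ (w.left⁻¹ * f * w.left)) := by
  ext
  · simp [mul_left, mul_right, inv_left, inv_right, left_inl, right_inl, mul_assoc]
  · simp [mul_right, inv_right, right_inl]

theorem core_invariably
    (hσ : ∀ (h : H) (f : WreathBase G X) (x : X),
      ((φ h f : WreathBase G X) : X → G) x = (f : X → G) (σ h x))
    (hinv : ∀ h x, σ h⁻¹ (σ h x) = x) (hinv' : ∀ h x, σ h (σ h⁻¹ x) = x)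
    (SG : Set G) (SH : Set H)
    (hSG : InvariablyGenerates G SG) (hSH : InvariablyGenerates H SH)
    (Z : Set X) (hZ : ∀ x, ∃ z ∈ Z, ∃ h : H, σ h z = x) :
    InvariablyGenerates ((WreathBase G X) ⋊[φ] H)
      (inr '' SH ∪ ⋃ z ∈ Z, (fun g => inl (WreathBase.single X z g)) '' SG) := by
  intro a
  set Sfull : Set ((WreathBase G X) ⋊[φ] H) :=
    inr '' SH ∪ ⋃ z ∈ Z, (fun g => inl (WreathBase.single X z g)) '' SG with hSfull
  set C := Subgroup.closure ((fun s => (a s)⁻¹ * s * a s) '' Sfull) with hC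
  have hmem : ∀ w ∈ Sfull, (a w)⁻¹ * w * a w ∈ C :=
    fun w hw => Subgroup.subset_closure ⟨w, hw, rfl⟩
  -- Step 1: C surjects onto H
  have hsurj : ∀ h : H, ∃ c ∈ C, c.right = h := by
    have hmap : C.map rightHom = ⊤ := by
      rw [eq_top_iff, ← hSH (fun h => (a (inr h)).right)]
      rw [Subgroup.closure_le]
      rintro _ ⟨h, hh, rfl⟩
      refine ⟨(a (inr h))⁻¹ * inr h * a (inr h), hmem _ (Or.inl ⟨h, hh, rfl⟩), ?_⟩
      simp [rightHom_eq_right, mul_right, inv_right, right_inr]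
    intro h
    have : h ∈ C.map rightHom := hmap ▸ Subgroup.mem_top h
    obtain ⟨c, hc, hcr⟩ := this
    exact ⟨c, hc, hcr⟩
  -- Step 2: transport of singles along the action
  have htrans : ∀ (h : H) (y : X), ∃ d : G, ∀ g : G,
      inl (WreathBase.single X y g) ∈ C →
        inl (WreathBase.single X (σ h y) (d⁻¹ * g * d)) ∈ C := by
    intro h y
    obtain ⟨c, hcC, hcr⟩ := hsurj h
    refine ⟨(c.left : X → G) y, fun g hg => ?_⟩
    have hm := C.mul_mem (C.mul_mem (C.inv_mem hcC) hg) hcC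
    rwa [conj_inl, conj_single, phi_single φ σ hσ hinv hinv', inv_inv, hcr] at hm
  -- Step 3: all singles at points of Z
  have hz_all : ∀ z ∈ Z, ∀ g : G, inl (WreathBase.single X z g) ∈ C := by
    intro z hzZ
    have hstep : ∀ s ∈ SG, ∃ e : G, inl (WreathBase.single X z (e⁻¹ * s * e)) ∈ C := by
      intro s hs
      set w := a (inl (WreathBase.single X z s)) with hw
      have h1 : inl (WreathBase.single X (σ w.right z)
          ((((w.left : X → G) z))⁻¹ * s * (w.left : X → G) z)) ∈ C := by
        have hm := hmem _ (Or.inr (Set.mem_biUnion hzZ ⟨s, hs, rfl⟩))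
        rwa [conj_inl, conj_single, phi_single φ σ hσ hinv hinv', inv_inv] at hm
      obtain ⟨d, hd⟩ := htrans w.right⁻¹ (σ w.right z)
      have h2 := hd _ h1
      rw [hinv] at h2
      refine ⟨(w.left : X → G) z * d, ?_⟩
      have : ((w.left : X → G) z * d)⁻¹ * s * ((w.left : X → G) z * d)
          = d⁻¹ * ((((w.left : X → G) z))⁻¹ * s * (w.left : X → G) z) * d := by group
      rw [this]
      exact h2
    choose e he using hstep
    set aG : G → G := fun s => if hs : s ∈ SG then e s hs else 1 with haG
    intro g
    set V : Subgroup G :=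
      C.comap ((inl : WreathBase G X →* (WreathBase G X) ⋊[φ] H).comp
        (WreathBase.single X z)) with hV
    have hVtop : Subgroup.closure ((fun s => (aG s)⁻¹ * s * aG s) '' SG) ≤ V := by
      rw [Subgroup.closure_le]
      rintro _ ⟨s, hs, rfl⟩
      show inl (WreathBase.single X z ((aG s)⁻¹ * s * aG s)) ∈ C
      rw [haG]
      simp only [dif_pos hs]
      exact he s hs
    rw [hSG aG] at hVtop
    exact hVtop (Subgroup.mem_top g)
  -- Step 4: all singles everywhere
  have hall : ∀ (x : X) (g : G), inl (WreathBase.single X x g) ∈ C := by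
    intro x g
    obtain ⟨z, hzZ, h, hhx⟩ := hZ x
    obtain ⟨d, hd⟩ := htrans h z
    have hm := hd (d * g * d⁻¹) (hz_all z hzZ _)
    rw [hhx] at hm
    have hg : d⁻¹ * (d * g * d⁻¹) * d = g := by group
    rwa [hg] at hm
  -- Step 5: the whole base
  have hbase : ∀ f : WreathBase G X, inl f ∈ C := by
    have key : ∀ s : Finset X, ∀ f : WreathBase G X,
        mulSupport (f : X → G) ⊆ ↑s → inl f ∈ C := by
      intro s
      induction s using Finset.induction_on with
      | empty =>
        intro f hf
        have hone : f = 1 := by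
          apply Subtype.ext; funext x
          by_contra hx
          simpa using hf hx
        rw [hone, map_one]
        exact C.one_mem
      | @insert b t hb ih =>
        intro f hf
        set g0 := (f : X → G) b with hg0
        set f' := (WreathBase.single X b g0)⁻¹ * f with hf'
        have hcoe : ∀ x, (f' : X → G) x = (if x = b then g0 else 1)⁻¹ * (f : X → G) x := by
          intro x
          rw [hf']
          simp only [Subgroup.coe_mul, Subgroup.coe_inv, Pi.mul_apply, Pi.inv_apply,
            single_apply]
        have hsup : mulSupport (f' : X → G) ⊆ ↑t := by
          intro x hx
          have hx' : (f' : X → G) x ≠ 1 := hx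
          by_cases hxb : x = b
          · exfalso; apply hx'
            rw [hcoe, if_pos hxb, hxb, ← hg0]
            group
          · have hfx : (f' : X → G) x = (f : X → G) x := by
              rw [hcoe, if_neg hxb]; group
            have hxs : x ∈ mulSupport (f : X → G) := by
              rw [mem_mulSupport, ← hfx]; exact hx'
            have := hf hxs
            simp only [Finset.coe_insert, Set.mem_insert_iff, Finset.mem_coe] at this
            exact this.resolve_left hxb
        have h1 := ih f' hsup
        have h2 := hall b g0
        have hfe : (inl f : (WreathBase G X) ⋊[φ] H) = inl (WreathBase.single X b g0) * inl f' := by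
          rw [← map_mul]
          congr 1
          rw [hf', mul_inv_cancel_left]
        rw [hfe]
        exact C.mul_mem h2 h1
    intro f
    exact key f.2.toFinset f f.2.coe_toFinset.superset
  -- Step 6: conclude
  rw [eq_top_iff]
  intro w _
  obtain ⟨c, hcC, hcr⟩ := hsurj w.right
  have h1 : (w * c⁻¹).right = 1 := by simp [mul_right, inv_right, hcr]
  have h2 : w * c⁻¹ = inl (w * c⁻¹).left := by
    ext
    · rfl
    · rw [h1, right_inl]
  have h3 : w * c⁻¹ ∈ C := h2 ▸ hbase _
  have h4 := C.mul_mem h3 hcC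
  rwa [inv_mul_cancel_right] at h4

end AuxIG

lemma InvariablyGenerates.mono {K : Type*} [Group K] {S T : Set K}
    (h : InvariablyGenerates K S) (hST : S ⊆ T) : InvariablyGenerates K T := by
  intro a
  rw [eq_top_iff, ← h a]
  exact Subgroup.closure_mono (Set.image_mono hST)

lemma IsFIG.fg {K : Type*} [Group K] (h : IsFIG K) : Group.FG K := by
  obtain ⟨S, hfin, hgen⟩ := h
  rw [Group.fg_iff]
  refine ⟨S, ?_, hfin⟩
  have := hgen (fun _ => 1)
  simpa using this

lemma fg_orbits {G H X : Type*} [Group G] [Group H] [Nontrivial G] [MulAction H X]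
    (hfg : Group.FG (WreathProduct G H X)) :
    ∃ R : Set X, R.Finite ∧ ∀ x : X, ∃ r ∈ R, ∃ h : H, h⁻¹ • r = x := by
  rw [Group.fg_iff] at hfg
  obtain ⟨T, hTtop, hTfin⟩ := hfg
  set R : Set X := ⋃ w ∈ T, mulSupport ((w : WreathProduct G H X).left : X → G) with hR
  have hRfin : R.Finite := hTfin.biUnion (fun w _ => w.left.2)
  set Y : Set X := {x | ∃ r ∈ R, ∃ h : H, h⁻¹ • r = x} with hYdef
  have hYinv : ∀ (h : H) (x : X), x ∈ Y → h • x ∈ Y := by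
    rintro h x ⟨r, hr, k, hk⟩
    exact ⟨r, hr, k * h⁻¹, by rw [← hk]; simp [mul_smul]⟩
  have hsupp : ∀ (h : H) (f : WreathBase G X), mulSupport (f : X → G) ⊆ Y →
      mulSupport ((wreathAut G H X h f : WreathBase G X) : X → G) ⊆ Y := by
    intro h f hf x hx
    have hx' : (f : X → G) (h⁻¹ • x) ≠ 1 := hx
    have := hYinv h _ (hf hx')
    rwa [smul_inv_smul] at this
  set WY : Subgroup (WreathProduct G H X) :=
    { carrier := {w | mulSupport ((w.left : WreathBase G X) : X → G) ⊆ Y}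
      one_mem' := by
        intro x hx
        exact absurd hx (by simp [one_left])
      mul_mem' := by
        intro w₁ w₂ h1 h2
        intro x hx
        have hx' : ((w₁.left : X → G) * ((wreathAut G H X w₁.right w₂.left : WreathBase G X) : X → G)) x ≠ 1 := hx
        rcases mulSupport_mul (w₁.left : X → G) _ hx' with h | h
        · exact h1 h
        · exact hsupp _ _ h2 h
      inv_mem' := by
        intro w hw x hx
        have hx' : ((wreathAut G H X w.right⁻¹ w.left⁻¹ : WreathBase G X) : X → G) x ≠ 1 := hx
        refine hsupp _ w.left⁻¹ ?_ hx'
        intro y hy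
        apply hw
        simpa using hy } with hWY
  have hTsub : Subgroup.closure T ≤ WY := by
    rw [Subgroup.closure_le]
    intro w hw x hx
    refine ⟨x, ?_, 1, by simp⟩
    exact Set.mem_biUnion hw hx
  rw [hTtop] at hTsub
  refine ⟨R, hRfin, fun x => ?_⟩
  obtain ⟨g, hg⟩ := exists_ne (1 : G)
  have hmem : inl (WreathBase.single X x g) ∈ WY := hTsub (Subgroup.mem_top _)
  have hx : x ∈ mulSupport (((inl (WreathBase.single X x g) :
      WreathProduct G H X).left : WreathBase G X) : X → G) := by
    rw [mem_mulSupport]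
    show ((WreathBase.single X x g : WreathBase G X) : X → G) x ≠ 1
    rw [single_apply, if_pos rfl]
    exact hg
  exact hmem hx

theorem stmt_14 (G H X : Type*) [Group G] [Group H] [Nontrivial G] [Nontrivial H]
    [MulAction H X] [FaithfulSMul H X] (hG : IsFIG G) (hH : IsFIG H) :
    IsIG (WreathProduct G H X) ∧
      (IsFIG (WreathProduct G H X) ↔ Group.FG (WreathProduct G H X)) ∧
      IsFIG (RegularWreath G H) := by
  obtain ⟨SG, hSGfin, hSG⟩ := hG
  obtain ⟨SH, hSHfin, hSH⟩ := hH
  have hW : ∀ (Z : Set X), (∀ x, ∃ z ∈ Z, ∃ h : H, h⁻¹ • z = x) →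
      InvariablyGenerates (WreathProduct G H X)
        (inr '' SH ∪ ⋃ z ∈ Z, (fun g => inl (WreathBase.single X z g)) '' SG) :=
    fun Z hZ => core_invariably (wreathAut G H X) (fun h x => h⁻¹ • x)
      (fun h f x => rfl) (by intro h x; simp) (by intro h x; simp) SG SH hSG hSH Z hZ
  refine ⟨?_, ⟨fun h => h.fg, fun hfg => ?_⟩, ?_⟩
  · exact (hW Set.univ (fun x => ⟨x, trivial, 1, by simp⟩)).mono (Set.subset_univ _)
  · obtain ⟨R, hRfin, hR⟩ := fg_orbits hfg
    exact ⟨_, (hSHfin.image _).union (hRfin.biUnion fun z _ => hSGfin.image _), hW R hR⟩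
  · have hreg := core_invariably (regularWreathAut G H) (fun h x => x * h)
      (fun h f x => rfl) (by intro h x; simp) (by intro h x; simp) SG SH hSG hSH
      ({1} : Set H) (fun x => ⟨1, rfl, x, one_mul x⟩)
    exact ⟨_, (hSHfin.image _).union ((Set.finite_singleton 1).biUnion
      fun z _ => hSGfin.image _), hreg⟩
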